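/- Let G = (V, E) be a 4-regular finite simple graph and let B ⊆ V be any 4-path vertex cover of G. Let b_e be the number of edges of G with both endpoints in B, and let s_c be the number of connected components of the induced subgraph G[V∖B] that are not triangles (these components are stars). Then |B| = (1/3)|V| + (1/3)b_e + (1/3)s_c, i.e., 3|B| = |V| + b_e + s_c. -/

import Mathlib

open SimpleGraph

/-- `G` contains a path of order `k` (i.e., with `k` vertices). -/
def HasPathOfOrder {V : Type*} (G : SimpleGraph V) (k : ℕ) : Prop :=
  ∃ (u v : V) (w : G.Walk u v), w.IsPath ∧ w.length + 1 = k

/-- `F` is a `k`-path vertex cover of `G`: the subgraph induced on the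
complement of `F` contains no path of order `k`. -/
def IsPathVertexCover {V : Type*} (G : SimpleGraph V) (k : ℕ) (F : Finset V) : Prop :=
  ¬ HasPathOfOrder (G.induce ((↑F : Set V)ᶜ)) k

/-- `psi G k` is the minimum cardinality of a `k`-path vertex cover of `G`. -/
noncomputable def psi {V : Type*} [Fintype V] (G : SimpleGraph V) (k : ℕ) : ℕ :=
  sInf {n | ∃ F : Finset V, IsPathVertexCover G k F ∧ F.card = n}

/-- The connected component `c` of `H` is a triangle: it has exactly three
vertices, which are mutually adjacent. -/
def CompIsTriangle {W : Type*} (H : SimpleGraph W) (c : H.ConnectedComponent) : Prop :=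
  Set.ncard {v | H.connectedComponentMk v = c} = 3 ∧
    ∀ u v, H.connectedComponentMk u = c → H.connectedComponentMk v = c →
      u ≠ v → H.Adj u v

open Finset

namespace PVC

lemma quad_hasPath {W : Type*} {K : SimpleGraph W} {a b c d : W}
    (hab : K.Adj a b) (hbc : K.Adj b c) (hcd : K.Adj c d)
    (hac : a ≠ c) (had : a ≠ d) (hbd : b ≠ d) : HasPathOfOrder K 4 := by
  refine ⟨a, d, .cons hab (.cons hbc (.cons hcd .nil)), ?_, rfl⟩
  simp [Walk.isPath_def, hab.ne, hbc.ne, hcd.ne, hac, had, hbd]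

lemma hasPath_of_induce {V : Type*} {G : SimpleGraph V} {s : Set V} {k : ℕ}
    (h : HasPathOfOrder (G.induce s) k) : HasPathOfOrder G k := by
  obtain ⟨u, v, w, hw, hl⟩ := h
  refine ⟨u, v, w.map ⟨Subtype.val, fun h => h⟩, ?_, by simpa using hl⟩
  exact Walk.map_isPath_of_injective Subtype.val_injective hw

lemma crossing {W : Type*} {K : SimpleGraph W} {T : Set W} {x y : W} (p : K.Walk x y)
    (hx : x ∉ T) (hy : y ∈ T) : ∃ d t, K.Adj d t ∧ d ∉ T ∧ t ∈ T := by
  induction p with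
  | nil => exact absurd hy hx
  | @cons a b c h p ih =>
    by_cases hb : b ∈ T
    · exact ⟨a, b, h, hx, hb⟩
    · exact ih hb hy

lemma reach_induce {V : Type*} {G : SimpleGraph V} {s : Set V} {x y : V} (w : G.Walk x y)
    (hw : ∀ v ∈ w.support, v ∈ s) :
    (G.induce s).Reachable ⟨x, hw _ w.start_mem_support⟩ ⟨y, hw _ w.end_mem_support⟩ := by
  induction w with
  | nil => exact Reachable.refl _
  | @cons a b c h p ih =>
    have hb : b ∈ s := hw _ (by simp)
    have h1 : (G.induce s).Adj ⟨a, hw _ (Walk.start_mem_support _)⟩ ⟨b, hb⟩ := h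
    exact h1.reachable.trans (ih (fun v hv => hw v (by simp [hv])))

lemma induce_supp_connected {W : Type*} [DecidableEq W] {K : SimpleGraph W}
    (c : K.ConnectedComponent) : (K.induce c.supp).Connected := by
  obtain ⟨v, rfl⟩ := c.exists_rep
  have hv : v ∈ (K.connectedComponentMk v).supp := by
    rw [ConnectedComponent.mem_supp_iff]
  rw [connected_iff]
  refine ⟨?_, ⟨⟨v, hv⟩⟩⟩
  rintro ⟨x, hx⟩ ⟨y, hy⟩
  have hx' : K.connectedComponentMk x = K.connectedComponentMk v := hx
  have hy' : K.connectedComponentMk y = K.connectedComponentMk v := hy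
  obtain ⟨w⟩ : K.Reachable x y := ConnectedComponent.exact (hx'.trans hy'.symm)
  have hsupp : ∀ u ∈ w.support, u ∈ (K.connectedComponentMk v).supp := by
    intro u hu
    have h1 : K.Reachable u x := (w.takeUntil u hu).reverse.reachable
    have h2 : K.connectedComponentMk u = K.connectedComponentMk x :=
      ConnectedComponent.sound h1
    exact h2.trans hx'
  exact reach_induce w hsupp

lemma edgecard_induce {W : Type*} [Fintype W] (G : SimpleGraph W) [DecidableRel G.Adj]
    (s : Set W) [DecidablePred (· ∈ s)] [Fintype (G.induce s).edgeSet]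
    [DecidablePred fun e : Sym2 W => ∀ v ∈ e, v ∈ s] :
    (G.induce s).edgeFinset.card = (G.edgeFinset.filter fun e => ∀ v ∈ e, v ∈ s).card := by
  classical
  refine Finset.card_bij (fun e _ => Sym2.map Subtype.val e) ?_ ?_ ?_
  · rintro e he
    induction e with
    | _ x y =>
      simp only [mem_edgeFinset, mem_edgeSet] at he
      simp only [Sym2.map_pair_eq, mem_filter, mem_edgeFinset, mem_edgeSet]
      exact ⟨he, by rintro v hv; rcases Sym2.mem_iff.mp hv with rfl | rfl <;> exact Subtype.prop _⟩
  · intro e1 _ e2 _ h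
    exact Sym2.map.injective Subtype.val_injective h
  · rintro e he
    simp only [mem_filter, mem_edgeFinset, mem_edgeSet] at he
    obtain ⟨he, hmem⟩ := he
    induction e with
    | _ x y =>
      refine ⟨s(⟨x, hmem x (by simp)⟩, ⟨y, hmem y (by simp)⟩), ?_, by simp⟩
      simpa [mem_edgeFinset, mem_edgeSet] using he

lemma degree_induce {W : Type*} [Fintype W] (G : SimpleGraph W) [DecidableRel G.Adj]
    (s : Set W) [DecidablePred (· ∈ s)] (x : s)
    [Fintype ((G.induce s).neighborSet x)] :
    (G.induce s).degree x = ((G.neighborFinset ↑x).filter (· ∈ s)).card := by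
  rw [← card_neighborFinset_eq_degree]
  refine Finset.card_bij (fun y _ => ↑y) ?_ ?_ ?_
  · intro y hy
    rw [mem_neighborFinset] at hy
    simp only [mem_filter, mem_neighborFinset]
    exact ⟨hy, y.prop⟩
  · intro y1 _ y2 _ h
    exact Subtype.ext h
  · intro y hy
    simp only [mem_filter, mem_neighborFinset] at hy
    refine ⟨⟨y, hy.2⟩, ?_, rfl⟩
    rw [mem_neighborFinset]
    exact hy.1

lemma handshake_induce {W : Type*} [Fintype W] [DecidableEq W] (G : SimpleGraph W)
    [DecidableRel G.Adj] (A : Finset W) :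
    ∑ v ∈ A, ((G.neighborFinset v).filter (· ∈ A)).card
      = 2 * ((G.edgeFinset.filter fun e => ∀ v ∈ e, v ∈ A).card) := by
  classical
  have h1 := SimpleGraph.sum_degrees_eq_twice_card_edges (G.induce (↑A : Set W))
  have h2 : ∀ x : (↑A : Set W), (G.induce (↑A : Set W)).degree x
      = ((G.neighborFinset ↑x).filter (· ∈ A)).card := by
    intro x
    rw [degree_induce G (↑A : Set W) x]
    congr 1
  have h3 : ∑ v ∈ A, ((G.neighborFinset v).filter (· ∈ A)).card
      = ∑ x : (↑A : Set W), (G.induce (↑A : Set W)).degree x := by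
    rw [← Finset.sum_finset_coe (fun v => ((G.neighborFinset v).filter (· ∈ A)).card) A]
    exact Finset.sum_congr rfl fun x _ => (h2 x).symm
  rw [h3, h1, edgecard_induce G (↑A : Set W)]
  congr 1

lemma triangle_comp {W : Type*} {K : SimpleGraph W}
    (hK : ¬HasPathOfOrder K 4) {c : K.ConnectedComponent} {x y z : W}
    (hxy : K.Adj x y) (hyz : K.Adj y z) (hzx : K.Adj z x)
    (hx : K.connectedComponentMk x = c) : CompIsTriangle K c := by
  have hy : K.connectedComponentMk y = c :=
    (ConnectedComponent.sound hxy.symm.reachable).trans hx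
  have hz : K.connectedComponentMk z = c :=
    (ConnectedComponent.sound hzx.reachable).trans hx
  have hsub : ∀ u, K.connectedComponentMk u = c → u ∈ ({x, y, z} : Set W) := by
    intro u hu
    by_contra hu'
    obtain ⟨p⟩ : K.Reachable u x := ConnectedComponent.exact (hu.trans hx.symm)
    obtain ⟨d, t, hdt, hd, ht⟩ := crossing (T := {x, y, z}) p hu' (by simp)
    have hdx : d ≠ x := fun h => hd (h ▸ (by simp : x ∈ ({x, y, z} : Set W)))
    have hdy : d ≠ y := fun h => hd (h ▸ (by simp : y ∈ ({x, y, z} : Set W)))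
    have hdz : d ≠ z := fun h => hd (h ▸ (by simp : z ∈ ({x, y, z} : Set W)))
    simp only [Set.mem_insert_iff, Set.mem_singleton_iff] at ht
    rcases ht with rfl | rfl | rfl
    · exact hK (quad_hasPath hdt hxy hyz hdy hdz hzx.ne')
    · exact hK (quad_hasPath hdt hyz hzx hdz hdx hxy.ne')
    · exact hK (quad_hasPath hdt hzx hxy hdx hdy hyz.ne')
  have hseteq : {u | K.connectedComponentMk u = c} = ({x, y, z} : Set W) := by
    ext u
    constructor
    · exact hsub u
    · intro hu
      simp only [Set.mem_insert_iff, Set.mem_singleton_iff] at hu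
      rcases hu with rfl | rfl | rfl <;> assumption
  constructor
  · rw [hseteq]
    exact Set.ncard_eq_three.mpr ⟨x, y, z, hxy.ne, hzx.ne', hyz.ne, rfl⟩
  · intro u1 u2 h1 h2 hne
    have m1 := hsub _ h1
    have m2 := hsub _ h2
    simp only [Set.mem_insert_iff, Set.mem_singleton_iff] at m1 m2
    rcases m1 with rfl | rfl | rfl <;> rcases m2 with rfl | rfl | rfl <;>
      first
      | exact absurd rfl hne
      | assumption
      | exact hxy.symm
      | exact hyz.symm
      | exact hzx.symm
      | exact hzx

lemma comp_count {W : Type*} [Fintype W] [DecidableEq W] (K : SimpleGraph W)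
    [DecidableRel K.Adj] (hK : ¬HasPathOfOrder K 4) (c : K.ConnectedComponent)
    [DecidablePred fun e : Sym2 W => ∀ v ∈ e, K.connectedComponentMk v = c]
    [Decidable (CompIsTriangle K c)] :
    (K.edgeFinset.filter fun e => ∀ v ∈ e, K.connectedComponentMk v = c).card
      + (if CompIsTriangle K c then 0 else 1) = c.supp.toFinset.card := by
  classical
  have hecard : (K.edgeFinset.filter fun e => ∀ v ∈ e, K.connectedComponentMk v = c).card
      = (K.induce c.supp).edgeFinset.card := by
    rw [edgecard_induce K c.supp]
    congr 1
    apply Finset.filter_congr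
    intro e _
    simp [ConnectedComponent.mem_supp_iff]
  have hconn : (K.induce c.supp).Connected := induce_supp_connected c
  have hKC : ¬HasPathOfOrder (K.induce c.supp) 4 := fun h4 => hK (hasPath_of_induce h4)
  by_cases htri : CompIsTriangle K c
  · -- triangle component
    obtain ⟨hnc, hadj⟩ := htri
    have hcard3 : c.supp.toFinset.card = 3 := by
      rw [← Set.ncard_eq_toFinset_card']
      exact hnc
    have hfin3 : Fintype.card c.supp = 3 := by
      rw [← Set.toFinset_card]
      exact hcard3
    have htop : K.induce c.supp = (⊤ : SimpleGraph c.supp) := by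
      ext a b
      constructor
      · exact fun h => h.ne
      · intro hne
        exact hadj ↑a ↑b a.prop b.prop (fun hv => hne (Subtype.ext hv))
    have hedge3 : (K.induce c.supp).edgeFinset.card = 3 := by
      have e1 : (K.induce c.supp).edgeFinset.card = (K.induce c.supp).edgeSet.ncard :=
        (Set.ncard_eq_toFinset_card' _).symm
      rw [e1, htop]
      have e2 : (⊤ : SimpleGraph c.supp).edgeSet.ncard
          = (⊤ : SimpleGraph c.supp).edgeFinset.card := Set.ncard_eq_toFinset_card' _
      rw [e2, card_edgeFinset_top_eq_card_choose_two, hfin3]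
      rfl
    have hT : CompIsTriangle K c := ⟨hnc, hadj⟩
    rw [hecard, hedge3, if_pos hT, hcard3]
  · -- star component: it is a tree
    have hac : (K.induce c.supp).IsAcyclic := by
      intro v w hcyc
      cases w with
      | nil => simpa using hcyc.three_le_length
      | @cons _ b _ h p =>
        have hchain : List.IsChain (K.induce c.supp).Adj (v :: p.support) :=
          Walk.isChain_adj_cons_support h p
        have hnodup : p.support.Nodup := by
          have := hcyc.2
          simpa using this
        have hlast : p.support.getLast? = some v := by
          rw [List.getLast?_eq_getLast (l := p.support) (by simp), Walk.getLast_support p]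
        have hplen : 2 ≤ p.length := by
          have := hcyc.three_le_length
          simpa using this
        have hslen : 3 ≤ p.support.length := by
          rw [Walk.length_support]
          omega
        rcases hsupp : p.support with _ | ⟨a, l1⟩
        · rw [hsupp] at hslen; simp at hslen
        cases l1 with
        | nil => rw [hsupp] at hslen; simp at hslen
        | cons b2 l2 =>
        cases l2 with
        | nil => rw [hsupp] at hslen; simp at hslen
        | cons c2 rest =>
        rw [hsupp] at hchain hnodup hlast
        simp only [List.isChain_cons_cons] at hchain
        obtain ⟨hva, hab, hbc, _⟩ := hchain
        cases rest with
        | nil =>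
          -- 3-cycle: triangle
          simp only [List.getLast?_cons_cons, List.getLast?_singleton,
            Option.some.injEq] at hlast
          subst hlast
          exact htri (triangle_comp hK (x := (c2 : W)) (y := (a : W)) (z := (b2 : W))
            hva hab hbc c2.prop)
        | cons r rs =>
          -- cycle of length ≥ 4 : gives a P4
          simp only [List.nodup_cons, List.mem_cons, not_or] at hnodup
          obtain ⟨⟨hab2, hac2, har, harest⟩, ⟨hb2c2, hb2r, hb2rest⟩, ⟨hc2r, hc2rest⟩, _⟩ := hnodup
          have hvrest : v ∈ (r :: rs) := by
            simp only [List.getLast?_cons_cons] at hlast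
            exact List.mem_of_mem_getLast? hlast
          have hav : a ≠ v := by
            rintro rfl
            rcases List.mem_cons.mp hvrest with h' | h'
            · exact har h'
            · exact harest h'
          have hb2v : b2 ≠ v := by
            rintro rfl
            rcases List.mem_cons.mp hvrest with h' | h'
            · exact hb2r h'
            · exact hb2rest h'
          have hc2v : c2 ≠ v := by
            rintro rfl
            rcases List.mem_cons.mp hvrest with h' | h'
            · exact hc2r h'
            · exact hc2rest h'
          exact hKC (quad_hasPath hva hab hbc hb2v.symm hc2v.symm hac2)
    have htree : (K.induce c.supp).IsTree := ⟨hconn, hac⟩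
    have h5 := htree.card_edgeFinset
    rw [← Set.toFinset_card] at h5
    rw [hecard, if_neg htri]
    exact h5

end PVC

open PVC

/-- If `G` is `4`-regular and `B` is a `4`-path vertex cover, then
`3|B| = |V| + b_e + s_c`, where `b_e` is the number of edges with both
endpoints in `B` and `s_c` is the number of (star) components of `G[V ∖ B]`
that are not triangles. -/
theorem stmt_14 {V : Type*} [Fintype V] [DecidableEq V] (G : SimpleGraph V)
    [DecidableRel G.Adj] (hreg : G.IsRegularOfDegree 4)
    (B : Finset V) (hB : IsPathVertexCover G 4 B)
    (be sc : ℕ)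
    (hbe : be = Set.ncard {e ∈ G.edgeSet | ∀ v ∈ e, v ∈ B})
    (hsc : sc = Nat.card {c : (G.induce ((↑B : Set V)ᶜ)).ConnectedComponent //
        ¬ CompIsTriangle _ c}) :
    3 * B.card = Fintype.card V + be + sc := by
  classical
  have hH : ¬ HasPathOfOrder (G.induce ((↑B : Set V)ᶜ)) 4 := hB
  -- be as a Finset card
  have hbe' : be = (G.edgeFinset.filter fun e => ∀ v ∈ e, v ∈ B).card := by
    rw [hbe]
    have hset : {e ∈ G.edgeSet | ∀ v ∈ e, v ∈ B}
        = ↑(G.edgeFinset.filter fun e => ∀ v ∈ e, v ∈ B) := by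
      ext e
      simp [mem_edgeFinset, Set.mem_setOf_eq]
    rw [hset, Set.ncard_coe_finset]
  -- degree split
  have hsplit : ∀ v : V, G.degree v
      = ((G.neighborFinset v).filter (· ∈ B)).card
        + ((G.neighborFinset v).filter (· ∉ B)).card := by
    intro v
    exact (Finset.card_filter_add_card_filter_not (fun u => u ∈ B)).symm
  -- degree sums
  have h1 : ∑ v ∈ B, G.degree v = 4 * B.card := by
    rw [Finset.sum_congr rfl (fun v _ => hreg v), Finset.sum_const, smul_eq_mul, mul_comm]
  have h2 : ∑ v ∈ Bᶜ, G.degree v = 4 * Bᶜ.card := by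
    rw [Finset.sum_congr rfl (fun v _ => hreg v), Finset.sum_const, smul_eq_mul, mul_comm]
  -- handshake inside B
  have h3 : ∑ v ∈ B, ((G.neighborFinset v).filter (· ∈ B)).card = 2 * be := by
    rw [hbe']
    exact handshake_induce G B
  -- handshake inside Bᶜ
  have h4 : ∑ v ∈ Bᶜ, ((G.neighborFinset v).filter (· ∈ Bᶜ)).card
      = 2 * (G.edgeFinset.filter fun e => ∀ v ∈ e, v ∈ Bᶜ).card := handshake_induce G Bᶜ
  -- the crossing-edge count, both ways
  have hm : ∑ v ∈ B, ((G.neighborFinset v).filter (· ∉ B)).card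
      = ∑ u ∈ Bᶜ, ((G.neighborFinset u).filter (· ∈ B)).card := by
    have lhs : ∀ v : V, ((G.neighborFinset v).filter (· ∉ B)).card
        = ∑ u ∈ Bᶜ, (if G.Adj v u then 1 else 0) := by
      intro v
      have he : (G.neighborFinset v).filter (· ∉ B) = Bᶜ.filter (fun u => G.Adj v u) := by
        ext u
        simp [mem_neighborFinset, and_comm]
      rw [he, Finset.card_filter]
    have rhs : ∀ u : V, ((G.neighborFinset u).filter (· ∈ B)).card
        = ∑ v ∈ B, (if G.Adj u v then 1 else 0) := by
      intro u
      have he : (G.neighborFinset u).filter (· ∈ B) = B.filter (fun v => G.Adj u v) := by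
        ext v
        simp [mem_neighborFinset, and_comm]
      rw [he, Finset.card_filter]
    simp only [lhs, rhs]
    rw [Finset.sum_comm]
    apply Finset.sum_congr rfl
    intro u _
    apply Finset.sum_congr rfl
    intro v _
    simp_rw [G.adj_comm]
  -- component analysis on H := G.induce (↑B)ᶜ
  -- vertex count of the complement
  have hWcard : Fintype.card ((↑B : Set V)ᶜ : Set V) = Bᶜ.card := by
    rw [← Set.toFinset_card]
    congr 1
    ext v
    simp
  -- edges outside B = edges of H
  have hEout : (G.edgeFinset.filter fun e => ∀ v ∈ e, v ∈ Bᶜ).card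
      = (G.induce ((↑B : Set V)ᶜ)).edgeFinset.card := by
    rw [edgecard_induce G ((↑B : Set V)ᶜ)]
    congr 1
    apply Finset.filter_congr
    intro e _
    simp
  -- vertices fiberwise by component
  have hV : ∑ c : (G.induce ((↑B : Set V)ᶜ)).ConnectedComponent, c.supp.toFinset.card
      = Fintype.card ((↑B : Set V)ᶜ : Set V) := by
    rw [← Finset.card_univ,
      Finset.card_eq_sum_card_fiberwise
        (f := fun v => (G.induce ((↑B : Set V)ᶜ)).connectedComponentMk v) (t := Finset.univ) (fun v _ => mem_univ _)]
    apply Finset.sum_congr rfl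
    intro c _
    congr 1
    ext v
    simp [ConnectedComponent.mem_supp_iff]
  -- edges fiberwise by component
  have hsame : ∀ e ∈ (G.induce ((↑B : Set V)ᶜ)).edgeFinset, ∀ u ∈ e, ∀ w ∈ e,
      (G.induce ((↑B : Set V)ᶜ)).connectedComponentMk u = (G.induce ((↑B : Set V)ᶜ)).connectedComponentMk w := by
    intro e he
    induction e with
    | _ a b =>
      have hadj : (G.induce ((↑B : Set V)ᶜ)).Adj a b := by
        rw [mem_edgeFinset, mem_edgeSet] at he
        exact he
      have hab : (G.induce ((↑B : Set V)ᶜ)).connectedComponentMk a = (G.induce ((↑B : Set V)ᶜ)).connectedComponentMk b :=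
        ConnectedComponent.sound hadj.reachable
      intro u hu w hw
      rcases Sym2.mem_iff.mp hu with rfl | rfl <;> rcases Sym2.mem_iff.mp hw with rfl | rfl <;>
        first | rfl | exact hab | exact hab.symm
  have hE : ∑ c : (G.induce ((↑B : Set V)ᶜ)).ConnectedComponent,
      ((G.induce ((↑B : Set V)ᶜ)).edgeFinset.filter fun e => ∀ v ∈ e, (G.induce ((↑B : Set V)ᶜ)).connectedComponentMk v = c).card
      = (G.induce ((↑B : Set V)ᶜ)).edgeFinset.card := by
    rw [Finset.card_eq_sum_card_fiberwise
      (f := fun e => (G.induce ((↑B : Set V)ᶜ)).connectedComponentMk e.out.1) (t := Finset.univ) (fun e _ => mem_univ _)]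
    apply Finset.sum_congr rfl
    intro c _
    congr 1
    apply Finset.filter_congr
    intro e he
    constructor
    · intro h
      exact h _ (Sym2.out_fst_mem e)
    · intro h v hv
      exact (hsame e he v hv _ (Sym2.out_fst_mem e)).trans h
  -- per-component identity
  have hcomp : ∀ c : (G.induce ((↑B : Set V)ᶜ)).ConnectedComponent,
      ((G.induce ((↑B : Set V)ᶜ)).edgeFinset.filter fun e => ∀ v ∈ e, (G.induce ((↑B : Set V)ᶜ)).connectedComponentMk v = c).card
        + (if CompIsTriangle (G.induce ((↑B : Set V)ᶜ)) c then 0 else 1) = c.supp.toFinset.card :=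
    fun c => comp_count (G.induce ((↑B : Set V)ᶜ)) hH c
  -- sc as a sum
  have hsc' : sc = ∑ c : (G.induce ((↑B : Set V)ᶜ)).ConnectedComponent, (if CompIsTriangle (G.induce ((↑B : Set V)ᶜ)) c then 0 else 1) := by
    rw [hsc, Nat.card_eq_fintype_card, Fintype.card_subtype, Finset.card_filter]
    apply Finset.sum_congr rfl
    intro c _
    by_cases h : CompIsTriangle (G.induce ((↑B : Set V)ᶜ)) c <;> simp [h]
  -- assemble the component identity
  have hC : (G.induce ((↑B : Set V)ᶜ)).edgeFinset.card + sc = Bᶜ.card := by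
    rw [← hWcard, ← hV, ← hE, hsc', ← Finset.sum_add_distrib]
    exact Finset.sum_congr rfl fun c _ => hcomp c
  -- final arithmetic
  have hA : 4 * B.card = 2 * be + ∑ u ∈ Bᶜ, ((G.neighborFinset u).filter (· ∈ B)).card := by
    rw [← h1, ← h3, ← hm, ← Finset.sum_add_distrib]
    exact Finset.sum_congr rfl fun v _ => hsplit v
  have hB2 : 4 * Bᶜ.card
      = (∑ u ∈ Bᶜ, ((G.neighborFinset u).filter (· ∈ B)).card) + 2 * (G.induce ((↑B : Set V)ᶜ)).edgeFinset.card := by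
    rw [← h2, ← hEout, ← h4, ← Finset.sum_add_distrib]
    apply Finset.sum_congr rfl
    intro v _
    rw [hsplit v]
    congr 2
    apply Finset.filter_congr
    intro u _
    simp
  have hD : B.card + Bᶜ.card = Fintype.card V := Finset.card_add_card_compl B
  omega
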